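/- Let m ≤ k be positive integers and a_1,…,a_n ∈ ℝ^m. For every x ∈ ℝ_{≥0}^n with Σ_{i∈[n]} x_i = k there exists a count vector c : [n] → ℕ with Σ_{i∈[n]} c_i = k such that det(Σ_{i∈[n]} c_i a_i a_iᵀ) ≥ e^{−m} · det(Σ_{i∈[n]} x_i a_i a_iᵀ); hence the D-optimal design problem with repetitions admits a (1/e)-approximation. -/

import Mathlib

open Matrix Finset

lemma det_expand_aux {m n : ℕ} (a : Fin n → Fin m → ℝ) (t : Fin n → ℝ) :
    (∑ i, t i • vecMulVec (a i) (a i)).det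
      = ∑ f : Fin m → Fin n, (∏ r, t (f r)) *
          ((∏ r, a (f r) r) * (Matrix.of fun r => a (f r)).det) := by
  have hM : (∑ i, t i • vecMulVec (a i) (a i))
      = fun r => ∑ i, (t i * a i r) • a i := by
    funext r c
    simp [vecMulVec, Finset.sum_apply, Matrix.sum_apply, mul_assoc]
  rw [hM]
  have h := (Matrix.detRowAlternating (R := ℝ) (n := Fin m)).toMultilinearMap.map_sum
    (g := fun r i => (t i * a i r) • a i)
  simp only [AlternatingMap.coe_multilinearMap] at h
  show Matrix.detRowAlternating _ = _
  rw [h]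
  refine Finset.sum_congr rfl fun f _ => ?_
  have := (Matrix.detRowAlternating (R := ℝ) (n := Fin m)).toMultilinearMap.map_smul_univ
    (fun r => t (f r) * a (f r) r) (fun r => a (f r))
  simp only [AlternatingMap.coe_multilinearMap] at this
  rw [this, Finset.prod_mul_distrib, smul_eq_mul]
  ring_nf
  rfl

lemma inner_sum_inj_aux {m k n : ℕ} (x : Fin n → ℝ) (hxs : ∑ i, x i = (k:ℝ))
    (f : Fin m → Fin n) (t : Fin m → Fin k) (ht : Function.Injective t) :
    ∑ w : Fin k → Fin n, (∏ j, x (w j)) *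
        ∏ r, (if w (t r) = f r then (1:ℝ) else 0)
      = (k:ℝ)^(k-m) * ∏ r, x (f r) := by
  have key : ∀ w : Fin k → Fin n,
      (∏ j, x (w j)) * ∏ r, (if w (t r) = f r then (1:ℝ) else 0)
        = ∏ j, (x (w j) * ∏ r ∈ univ.filter fun r => t r = j,
            (if w j = f r then (1:ℝ) else 0)) := by
    intro w
    rw [Finset.prod_mul_distrib]
    congr 1
    rw [← Finset.prod_fiberwise univ t (fun r => if w (t r) = f r then (1:ℝ) else 0)]
    refine Finset.prod_congr rfl fun j _ => Finset.prod_congr rfl fun r hr => ?_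
    rw [Finset.mem_filter] at hr
    rw [hr.2]
  simp_rw [key]
  have : (∑ w : Fin k → Fin n, ∏ j, (x (w j) * ∏ r ∈ univ.filter fun r => t r = j,
      (if w j = f r then (1:ℝ) else 0)))
      = ∏ j : Fin k, ∑ i : Fin n, (x i * ∏ r ∈ univ.filter fun r => t r = j,
          (if i = f r then (1:ℝ) else 0)) := by
    rw [← Finset.sum_prod_piFinset (univ : Finset (Fin n))]
    rw [Fintype.piFinset_univ]
  rw [this]
  set val : Fin k → ℝ := fun j => ∑ i : Fin n, (x i * ∏ r ∈ univ.filter fun r => t r = j,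
      (if i = f r then (1:ℝ) else 0)) with hvaldef
  rw [← Finset.prod_mul_prod_compl (univ.image t) val]
  have h1 : ∏ j ∈ univ.image t, val j = ∏ r, x (f r) := by
    rw [Finset.prod_image (fun r _ s _ h => ht h)]
    refine Finset.prod_congr rfl fun r _ => ?_
    have hfib : (univ.filter fun r' => t r' = t r) = {r} := by
      ext r'
      simp [ht.eq_iff]
    simp [hvaldef, hfib]
  have h2 : ∏ j ∈ (univ.image t)ᶜ, val j = (k:ℝ)^(k-m) := by
    have hconst : ∀ j ∈ (univ.image t)ᶜ, val j = (k:ℝ) := by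
      intro j hj
      have hfib : (univ.filter fun r' => t r' = j) = ∅ := by
        ext r'
        simp only [Finset.mem_filter, Finset.mem_univ, true_and, Finset.notMem_empty,
          iff_false]
        intro h
        exact absurd (Finset.mem_image.2 ⟨r', Finset.mem_univ _, h⟩)
          (Finset.mem_compl.1 hj)
      simp [hvaldef, hfib, hxs]
    rw [Finset.prod_congr rfl hconst, Finset.prod_const]
    congr 1
    rw [Finset.card_compl, Finset.card_image_of_injective _ ht]
    simp
  rw [h1, h2, mul_comm]

lemma sum_weight_count_aux {m k n : ℕ} (x : Fin n → ℝ) (hxs : ∑ i, x i = (k:ℝ))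
    (f : Fin m → Fin n) (hf : Function.Injective f) :
    ∑ w : Fin k → Fin n, (∏ j, x (w j)) *
        ∏ r, (((univ.filter fun j => w j = f r).card : ℝ))
      = (k.descFactorial m : ℝ) * ((k:ℝ)^(k-m) * ∏ r, x (f r)) := by
  classical
  have hcard : ∀ (w : Fin k → Fin n) (r : Fin m),
      (((univ.filter fun j => w j = f r).card : ℝ))
        = ∑ j : Fin k, (if w j = f r then (1:ℝ) else 0) := by
    intro w r
    rw [Finset.card_filter]
    push_cast
    simp
  have hexpand : ∀ w : Fin k → Fin n,
      (∏ r, (((univ.filter fun j => w j = f r).card : ℝ)))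
        = ∑ t : Fin m → Fin k, ∏ r, (if w (t r) = f r then (1:ℝ) else 0) := by
    intro w
    simp_rw [hcard w]
    rw [Finset.prod_univ_sum]
    rw [Fintype.piFinset_univ]
  simp_rw [hexpand, Finset.mul_sum]
  rw [Finset.sum_comm]
  rw [← Finset.sum_filter_add_sum_filter_not univ (fun t : Fin m → Fin k => Function.Injective t)]
  have hnon : ∑ t ∈ univ.filter (fun t : Fin m → Fin k => ¬ Function.Injective t),
      ∑ w : Fin k → Fin n, (∏ j, x (w j)) * ∏ r, (if w (t r) = f r then (1:ℝ) else 0) = 0 := by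
    refine Finset.sum_eq_zero fun t ht => Finset.sum_eq_zero fun w _ => ?_
    rw [Finset.mem_filter] at ht
    obtain ⟨r, r', htr, hrr⟩ := Function.not_injective_iff.1 ht.2
    have hzero : ∏ r, (if w (t r) = f r then (1:ℝ) else 0) = 0 := by
      by_cases h : w (t r) = f r
      · refine Finset.prod_eq_zero (Finset.mem_univ r') ?_
        rw [← htr, h, if_neg (fun h' => hrr (hf h'))]
      · exact Finset.prod_eq_zero (Finset.mem_univ r) (if_neg h)
    rw [hzero, mul_zero]
  have hinj : ∑ t ∈ univ.filter (fun t : Fin m → Fin k => Function.Injective t),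
      ∑ w : Fin k → Fin n, (∏ j, x (w j)) * ∏ r, (if w (t r) = f r then (1:ℝ) else 0)
      = (k.descFactorial m : ℝ) * ((k:ℝ)^(k-m) * ∏ r, x (f r)) := by
    have hconst : ∀ t ∈ univ.filter (fun t : Fin m → Fin k => Function.Injective t),
        ∑ w : Fin k → Fin n, (∏ j, x (w j)) * ∏ r, (if w (t r) = f r then (1:ℝ) else 0)
          = (k:ℝ)^(k-m) * ∏ r, x (f r) := by
      intro t ht
      exact inner_sum_inj_aux x hxs f t (Finset.mem_filter.1 ht).2
    rw [Finset.sum_congr rfl hconst, Finset.sum_const, nsmul_eq_mul]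
    congr 1
    rw [← Fintype.card_subtype]
    rw [Fintype.card_congr (Equiv.subtypeInjectiveEquivEmbedding (Fin m) (Fin k))]
    rw [Fintype.card_embedding_eq]
    simp
  rw [hnon, hinj, add_zero]

lemma det_nonneg_psd_aux {m n : ℕ} (a : Fin n → Fin m → ℝ) (x : Fin n → ℝ) (hx : ∀ i, 0 ≤ x i) :
    0 ≤ (∑ i, x i • vecMulVec (a i) (a i)).det := by
  set B : Matrix (Fin n) (Fin m) ℝ := Matrix.of fun i r => Real.sqrt (x i) * a i r with hB
  have hMe : (∑ i, x i • vecMulVec (a i) (a i)) = Bᴴ * B := by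
    ext r c
    simp only [Matrix.sum_apply, Matrix.smul_apply, vecMulVec_apply, Matrix.mul_apply,
      Matrix.conjTranspose_apply, hB, Matrix.of_apply, star_trivial, smul_eq_mul]
    refine Finset.sum_congr rfl fun i _ => ?_
    have h := Real.mul_self_sqrt (hx i)
    linear_combination (-(a i r * a i c)) * h
  rw [hMe]
  have hpsd := Matrix.posSemidef_conjTranspose_mul_self B
  exact hpsd.det_nonneg

lemma descFactorial_ge_aux {m k : ℕ} (hm : 1 ≤ m) (hmk : m ≤ k) :
    Real.exp (-(m:ℝ)) * (k:ℝ)^m ≤ (k.descFactorial m : ℝ) := by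
  have hm0 : (0:ℝ) < m := by exact_mod_cast hm
  have hk0 : (0:ℝ) ≤ k := Nat.cast_nonneg k
  have hcast : ∀ N : ℕ, m ≤ N → ((N.descFactorial m : ℝ) = ∏ j ∈ range m, ((N:ℝ) - j)) := by
    intro N hN
    rw [Nat.descFactorial_eq_prod_range, Nat.cast_prod]
    refine Finset.prod_congr rfl fun j hj => ?_
    rw [Nat.cast_sub (le_trans (le_of_lt (Finset.mem_range.1 hj)) hN)]
  have hfacm : ∏ j ∈ range m, ((m:ℝ) - j) = (m.factorial : ℝ) := by
    rw [← hcast m le_rfl, Nat.descFactorial_self]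
  have hstep : ∏ j ∈ range m, ((k:ℝ)/m * ((m:ℝ) - j)) ≤ ∏ j ∈ range m, ((k:ℝ) - j) := by
    refine Finset.prod_le_prod (fun j hj => ?_) (fun j hj => ?_)
    · have hj' : (j:ℝ) < m := by exact_mod_cast Finset.mem_range.1 hj
      have : (0:ℝ) ≤ (m:ℝ) - j := by linarith
      positivity
    · have hj' : (j:ℝ) < m := by exact_mod_cast Finset.mem_range.1 hj
      have hkm : (m:ℝ) ≤ k := by exact_mod_cast hmk
      rw [div_mul_eq_mul_div, div_le_iff₀ hm0]
      nlinarith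
  calc Real.exp (-(m:ℝ)) * (k:ℝ)^m
      ≤ ((k:ℝ)/m)^m * (m.factorial : ℝ) := by
        have hfact : Real.exp (-(m:ℝ)) * (m:ℝ)^m ≤ (m.factorial : ℝ) := by
          have hsum := Real.sum_le_exp_of_nonneg (le_of_lt hm0) (m+1)
          have hsingle : (m:ℝ)^m / (m.factorial : ℝ)
              ≤ ∑ i ∈ range (m+1), (m:ℝ)^i / (i.factorial : ℝ) := by
            refine Finset.single_le_sum (f := fun i => (m:ℝ)^i / (i.factorial : ℝ))
              (fun i _ => ?_) (Finset.self_mem_range_succ m)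
            positivity
          have h1 : (m:ℝ)^m / (m.factorial : ℝ) ≤ Real.exp m := le_trans hsingle hsum
          have hf0 : (0:ℝ) < (m.factorial : ℝ) := by exact_mod_cast m.factorial_pos
          rw [div_le_iff₀ hf0] at h1
          rw [Real.exp_neg]
          rw [inv_mul_le_iff₀ (Real.exp_pos _)]
          linarith [h1]
        calc Real.exp (-(m:ℝ)) * (k:ℝ)^m
            = ((k:ℝ)/m)^m * (Real.exp (-(m:ℝ)) * (m:ℝ)^m) := by
              rw [div_pow]
              field_simp
          _ ≤ ((k:ℝ)/m)^m * (m.factorial : ℝ) := by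
              refine mul_le_mul_of_nonneg_left hfact (by positivity)
    _ = ∏ j ∈ range m, ((k:ℝ)/m * ((m:ℝ) - j)) := by
        rw [Finset.prod_mul_distrib, Finset.prod_const, Finset.card_range, hfacm]
    _ ≤ ∏ j ∈ range m, ((k:ℝ) - j) := hstep
    _ = (k.descFactorial m : ℝ) := (hcast k hmk).symm

/-- The D-optimal design problem with repetitions admits a `1/e`-approximation:
for every fractional solution there is an integral count vector `c` with `∑ c_i = k`
whose determinant is at least `e^{-m}` times the fractional determinant. -/
theorem stmt12 (m k n : ℕ) (hm : 1 ≤ m) (hmk : m ≤ k)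
    (a : Fin n → Fin m → ℝ) (x : Fin n → ℝ)
    (hx : ∀ i, 0 ≤ x i) (hxs : ∑ i, x i = (k : ℝ)) :
    ∃ c : Fin n → ℕ, ∑ i, c i = k ∧
      (∑ i, (c i : ℝ) • vecMulVec (a i) (a i)).det
        ≥ Real.exp (-(m : ℝ)) * (∑ i, x i • vecMulVec (a i) (a i)).det := by
  classical
  have hk1 : 1 ≤ k := le_trans hm hmk
  have hn : 0 < n := by
    rcases Nat.eq_zero_or_pos n with h | h
    · exfalso
      subst h
      rw [Finset.univ_eq_empty, Finset.sum_empty] at hxs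
      have : (k:ℝ) ≥ 1 := by exact_mod_cast hk1
      linarith
    · exact h
  haveI : Nonempty (Fin n) := ⟨⟨0, hn⟩⟩
  set X : ℝ := (∑ i, x i • vecMulVec (a i) (a i)).det with hX
  set cnt : (Fin k → Fin n) → Fin n → ℕ :=
    fun w i => (univ.filter fun j => w j = i).card with hcnt
  set g : (Fin k → Fin n) → ℝ :=
    fun w => (∑ i, ((cnt w i : ℕ) : ℝ) • vecMulVec (a i) (a i)).det with hg
  set W : (Fin k → Fin n) → ℝ := fun w => ∏ j, x (w j) with hW
  have hWnn : ∀ w, 0 ≤ W w := fun w => Finset.prod_nonneg fun j _ => hx _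
  have hWsum : ∑ w : Fin k → Fin n, W w = (k:ℝ)^k := by
    rw [hW, ← Fintype.piFinset_univ, Finset.sum_prod_piFinset]
    simp [hxs]
  set K : (Fin m → Fin n) → ℝ :=
    fun f => (∏ r, a (f r) r) * (Matrix.of fun r => a (f r)).det with hK
  have hKzero : ∀ f : Fin m → Fin n, ¬ Function.Injective f → K f = 0 := by
    intro f hfni
    obtain ⟨r, r', htr, hrr⟩ := Function.not_injective_iff.1 hfni
    have hdz : (Matrix.of fun r => a (f r)).det = 0 := by
      refine Matrix.det_zero_of_row_eq hrr ?_
      show a (f r) = a (f r')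
      rw [htr]
    simp [hK, hdz]
  have master : ∑ w : Fin k → Fin n, W w * g w
      = (k.descFactorial m : ℝ) * ((k:ℝ)^(k-m) * X) := by
    have hexp : ∀ w, g w = ∑ f : Fin m → Fin n, (∏ r, ((cnt w (f r) : ℕ) : ℝ)) * K f :=
      fun w => det_expand_aux a (fun i => ((cnt w i : ℕ) : ℝ))
    calc ∑ w : Fin k → Fin n, W w * g w
        = ∑ w : Fin k → Fin n, ∑ f : Fin m → Fin n,
            (W w * ∏ r, ((cnt w (f r) : ℕ) : ℝ)) * K f := by
          refine Finset.sum_congr rfl fun w _ => ?_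
          rw [hexp w, Finset.mul_sum]
          refine Finset.sum_congr rfl fun f _ => ?_
          ring
      _ = ∑ f : Fin m → Fin n,
            (∑ w : Fin k → Fin n, W w * ∏ r, ((cnt w (f r) : ℕ) : ℝ)) * K f := by
          rw [Finset.sum_comm]
          refine Finset.sum_congr rfl fun f _ => ?_
          rw [Finset.sum_mul]
      _ = ∑ f : Fin m → Fin n,
            ((k.descFactorial m : ℝ) * ((k:ℝ)^(k-m) * ∏ r, x (f r))) * K f := by
          refine Finset.sum_congr rfl fun f _ => ?_
          by_cases hfinj : Function.Injective f
          · rw [sum_weight_count_aux x hxs f hfinj]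
          · rw [hKzero f hfinj, mul_zero, mul_zero]
      _ = (k.descFactorial m : ℝ) * ((k:ℝ)^(k-m) * X) := by
          rw [hX, det_expand_aux a x]
          rw [Finset.mul_sum, Finset.mul_sum]
          refine Finset.sum_congr rfl fun f _ => ?_
          ring
  obtain ⟨w0, _, hw0⟩ := Finset.exists_max_image (univ : Finset (Fin k → Fin n)) g
    Finset.univ_nonempty
  refine ⟨cnt w0, ?_, ?_⟩
  · rw [hcnt]
    have := Finset.card_eq_sum_card_fiberwise
      (f := fun j : Fin k => w0 j) (s := univ) (t := univ) (fun j _ => Finset.mem_univ _)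
    simpa using this.symm
  · show g w0 ≥ Real.exp (-(m : ℝ)) * X
    have hXnn : 0 ≤ X := det_nonneg_psd_aux a x hx
    have hkk : (0:ℝ) < (k:ℝ)^k := by
      have : (0:ℝ) < (k:ℝ) := by exact_mod_cast hk1
      positivity
    have hub : (k.descFactorial m : ℝ) * ((k:ℝ)^(k-m) * X) ≤ (k:ℝ)^k * g w0 := by
      rw [← master, ← hWsum, Finset.sum_mul]
      exact Finset.sum_le_sum fun w _ =>
        mul_le_mul_of_nonneg_left (hw0 w (Finset.mem_univ w)) (hWnn w)
    have hlb : Real.exp (-(m : ℝ)) * ((k:ℝ)^k * X)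
        ≤ (k.descFactorial m : ℝ) * ((k:ℝ)^(k-m) * X) := by
      have hpow : (k:ℝ)^k = (k:ℝ)^m * (k:ℝ)^(k-m) := by
        rw [← pow_add, Nat.add_sub_cancel' hmk]
      have hd := descFactorial_ge_aux hm hmk
      have hpnn : (0:ℝ) ≤ (k:ℝ)^(k-m) * X := by positivity
      calc Real.exp (-(m : ℝ)) * ((k:ℝ)^k * X)
          = (Real.exp (-(m : ℝ)) * (k:ℝ)^m) * ((k:ℝ)^(k-m) * X) := by
            rw [hpow]; ring
        _ ≤ (k.descFactorial m : ℝ) * ((k:ℝ)^(k-m) * X) :=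
            mul_le_mul_of_nonneg_right hd hpnn
    have := le_trans hlb hub
    have h2 : (k:ℝ)^k * (Real.exp (-(m : ℝ)) * X) ≤ (k:ℝ)^k * g w0 := by
      calc (k:ℝ)^k * (Real.exp (-(m : ℝ)) * X)
          = Real.exp (-(m : ℝ)) * ((k:ℝ)^k * X) := by ring
        _ ≤ (k:ℝ)^k * g w0 := this
    exact le_of_mul_le_mul_left h2 hkk
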